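/- Let T be a real n×n matrix, c ∈ ℝⁿ, and let ν be a Borel probability measure on ℝⁿ with ∫‖w‖² dν(w) < ∞ and ∫ w dν(w) = 0; set S := ∫ w wᵀ dν(w). Let π be a Borel probability measure on ℝⁿ with ∫‖z‖² dπ(z) < ∞ such that the pushforward of π ⊗ ν under (z, w) ↦ T z + c + w equals π, and let m := ∫ z dπ(z) and Σ := ∫ (z − m)(z − m)ᵀ dπ(z). Then Σ = T Σ Tᵀ + S. -/

import Mathlib

open Matrix MeasureTheory

section Aux

variable {n : ℕ}

private theorem stmt11_aux_fst (π ν : Measure (EuclideanSpace ℝ (Fin n)))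
    [IsProbabilityMeasure π] [IsProbabilityMeasure ν]
    {β : Type*} [NormedAddCommGroup β] [NormedSpace ℝ β]
    (g : EuclideanSpace ℝ (Fin n) → β) (hg : AEStronglyMeasurable g π)
    (hgi : Integrable g π) :
    Integrable (fun p : EuclideanSpace ℝ (Fin n) × EuclideanSpace ℝ (Fin n) => g p.1)
        (π.prod ν) ∧
      ∫ p, g p.1 ∂(π.prod ν) = ∫ z, g z ∂π := by
  have hmap : Measure.map Prod.fst (π.prod ν) = π := Measure.fst_prod
  constructor
  · rw [← hmap] at hgi
    exact (integrable_map_measure (by rwa [hmap]) measurable_fst.aemeasurable).mp hgi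
  · conv_rhs => rw [← hmap]
    rw [integral_map measurable_fst.aemeasurable (by rwa [hmap])]

private theorem stmt11_aux_snd (π ν : Measure (EuclideanSpace ℝ (Fin n)))
    [IsProbabilityMeasure π] [IsProbabilityMeasure ν]
    {β : Type*} [NormedAddCommGroup β] [NormedSpace ℝ β]
    (g : EuclideanSpace ℝ (Fin n) → β) (hg : AEStronglyMeasurable g ν)
    (hgi : Integrable g ν) :
    Integrable (fun p : EuclideanSpace ℝ (Fin n) × EuclideanSpace ℝ (Fin n) => g p.2)
        (π.prod ν) ∧
      ∫ p, g p.2 ∂(π.prod ν) = ∫ z, g z ∂ν := by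
  have hmap : Measure.map Prod.snd (π.prod ν) = ν := Measure.snd_prod
  constructor
  · rw [← hmap] at hgi
    exact (integrable_map_measure (by rwa [hmap]) measurable_snd.aemeasurable).mp hgi
  · conv_rhs => rw [← hmap]
    rw [integral_map measurable_snd.aemeasurable (by rwa [hmap])]

private theorem stmt11_memL2 (μ : Measure (EuclideanSpace ℝ (Fin n)))
    (h : ∫⁻ z, (‖z‖₊ : ENNReal) ^ 2 ∂μ < ⊤) :
    MemLp (fun z : EuclideanSpace ℝ (Fin n) => z) 2 μ := by
  refine ⟨aestronglyMeasurable_id, ?_⟩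
  rw [eLpNorm_lt_top_iff_lintegral_rpow_enorm_lt_top (by norm_num) (by norm_num)]
  simpa [ENNReal.toReal_ofNat, ENNReal.rpow_natCast, enorm_eq_nnnorm] using h

private theorem stmt11_onehalf : (1 : ENNReal) / 1 = 1 / 2 + 1 / 2 := by
  simp [ENNReal.inv_two_add_inv_two]

private theorem stmt11_expand (f g : Fin n → ℝ) (b b' : ℝ) :
    ((∑ k, f k) + b) * ((∑ l, g l) + b') =
      (∑ k, ∑ l, f k * g l) + (∑ k, f k * b') + (∑ l, b * g l) + b * b' := by
  rw [add_mul, mul_add, mul_add, Finset.sum_mul_sum, ← Finset.sum_mul, ← Finset.mul_sum]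
  ring

end Aux

/-- If `π` is an invariant law (with finite second moment) of the random affine recursion
`z ↦ T z + c + w`, where the noise `w ∼ ν` has finite second moment, mean zero and
covariance `S = ∫ w wᵀ dν`, then the stationary covariance
`Σ = ∫ (z - m)(z - m)ᵀ dπ` satisfies the Stein equation `Σ = T Σ Tᵀ + S`. -/
theorem stmt11 {n : ℕ} (T : Matrix (Fin n) (Fin n) ℝ) (c : EuclideanSpace ℝ (Fin n))
    (ν π : Measure (EuclideanSpace ℝ (Fin n)))
    [IsProbabilityMeasure ν] [IsProbabilityMeasure π]
    (hν2 : ∫⁻ w, (‖w‖₊ : ENNReal) ^ 2 ∂ν < ⊤) (hν0 : (∫ w, w ∂ν) = 0)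
    (hπ2 : ∫⁻ z, (‖z‖₊ : ENNReal) ^ 2 ∂π < ⊤)
    (hstat : Measure.map
        (fun p : EuclideanSpace ℝ (Fin n) × EuclideanSpace ℝ (Fin n) =>
          Matrix.toEuclideanLin T p.1 + c + p.2) (π.prod ν) = π) :
    let m : EuclideanSpace ℝ (Fin n) := ∫ z, z ∂π
    let S : Matrix (Fin n) (Fin n) ℝ := Matrix.of fun i j => ∫ w, w i * w j ∂ν
    let Sig : Matrix (Fin n) (Fin n) ℝ :=
      Matrix.of fun i j => ∫ z, (z i - m i) * (z j - m j) ∂π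
    Sig = T * Sig * Tᵀ + S := by
  intro m S Sig
  set F : EuclideanSpace ℝ (Fin n) × EuclideanSpace ℝ (Fin n) → EuclideanSpace ℝ (Fin n) :=
    fun p => Matrix.toEuclideanLin T p.1 + c + p.2 with hF
  have hmdef : m = ∫ z, z ∂π := rfl
  -- measurability of F
  have hFc : Continuous F :=
    (((Matrix.toEuclideanLin T).toContinuousLinearMap.continuous.comp
      continuous_fst).add continuous_const).add continuous_snd
  have hFm : AEMeasurable F (π.prod ν) := hFc.measurable.aemeasurable
  -- coordinate continuity
  have hcont : ∀ i : Fin n, Continuous (fun z : EuclideanSpace ℝ (Fin n) => z i) := by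
    intro i
    have := (EuclideanSpace.proj (𝕜 := ℝ) i).continuous
    exact this
  -- L² facts
  have hπL2 : MemLp (fun z : EuclideanSpace ℝ (Fin n) => z) 2 π := stmt11_memL2 π hπ2
  have hνL2 : MemLp (fun z : EuclideanSpace ℝ (Fin n) => z) 2 ν := stmt11_memL2 ν hν2
  have hcπ : ∀ i : Fin n, MemLp (fun z : EuclideanSpace ℝ (Fin n) => z i) 2 π := by
    intro i
    have := (EuclideanSpace.proj (𝕜 := ℝ) i).comp_memLp' hπL2
    exact this
  have hcν : ∀ i : Fin n, MemLp (fun z : EuclideanSpace ℝ (Fin n) => z i) 2 ν := by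
    intro i
    have := (EuclideanSpace.proj (𝕜 := ℝ) i).comp_memLp' hνL2
    exact this
  have hcaπ : ∀ (i : Fin n) (a : ℝ),
      MemLp (fun z : EuclideanSpace ℝ (Fin n) => z i - a) 2 π :=
    fun i a => (hcπ i).sub (memLp_const a)
  -- products are integrable
  have hmulπ : ∀ (i j : Fin n) (a b : ℝ),
      Integrable (fun z : EuclideanSpace ℝ (Fin n) => (z i - a) * (z j - b)) π := by
    intro i j a b
    have := (hcaπ j b).smul (hcaπ i a) (p := 2) (q := 2) (r := 1)
    rw [memLp_one_iff_integrable] at this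
    simpa [smul_eq_mul, mul_comm, Pi.mul_def] using this
  have hmulν : ∀ i j : Fin n,
      Integrable (fun w : EuclideanSpace ℝ (Fin n) => w i * w j) ν := by
    intro i j
    have h1 : MemLp (fun z : EuclideanSpace ℝ (Fin n) => z i - 0) 2 ν :=
      (hcν i).sub (memLp_const 0)
    have h2 : MemLp (fun z : EuclideanSpace ℝ (Fin n) => z j - 0) 2 ν :=
      (hcν j).sub (memLp_const 0)
    have := h2.smul h1 (p := 2) (q := 2) (r := 1)
    rw [memLp_one_iff_integrable] at this
    simpa [smul_eq_mul, mul_comm, sub_zero, Pi.mul_def] using this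
  -- integrable coordinates
  have hintπ1 : Integrable (fun z : EuclideanSpace ℝ (Fin n) => z) π :=
    hπL2.integrable one_le_two
  have hintν1 : Integrable (fun z : EuclideanSpace ℝ (Fin n) => z) ν :=
    hνL2.integrable one_le_two
  have hintπc : ∀ i : Fin n, Integrable (fun z : EuclideanSpace ℝ (Fin n) => z i) π :=
    fun i => (hcπ i).integrable one_le_two
  have hintνc : ∀ i : Fin n, Integrable (fun z : EuclideanSpace ℝ (Fin n) => z i) ν :=
    fun i => (hcν i).integrable one_le_two
  have hintcaπ : ∀ (i : Fin n) (a : ℝ),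
      Integrable (fun z : EuclideanSpace ℝ (Fin n) => z i - a) π :=
    fun i a => (hcaπ i a).integrable one_le_two
  -- coordinates of means
  have hmi : ∀ i : Fin n, ∫ z, z i ∂π = m i := by
    intro i
    have := (EuclideanSpace.proj (𝕜 := ℝ) i).integral_comp_comm hintπ1
    simpa using this
  have hν0i : ∀ i : Fin n, ∫ w, w i ∂ν = 0 := by
    intro i
    have h := (EuclideanSpace.proj (𝕜 := ℝ) i).integral_comp_comm hintν1
    rw [hν0] at h
    simpa using h
  have hcent : ∀ i : Fin n, ∫ z, (z i - m i) ∂π = 0 := by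
    intro i
    rw [integral_sub (hintπc i) (integrable_const _), hmi i, integral_const]
    simp
  -- product-measure integrability of the basic pieces
  have hfst := stmt11_aux_fst π ν (fun z : EuclideanSpace ℝ (Fin n) => z)
    aestronglyMeasurable_id hintπ1
  have hsnd := stmt11_aux_snd π ν (fun z : EuclideanSpace ℝ (Fin n) => z)
    aestronglyMeasurable_id hintν1
  have hfst1 : Integrable
      (fun p : EuclideanSpace ℝ (Fin n) × EuclideanSpace ℝ (Fin n) => p.1) (π.prod ν) :=
    hfst.1
  have hsnd1 : Integrable
      (fun p : EuclideanSpace ℝ (Fin n) × EuclideanSpace ℝ (Fin n) => p.2) (π.prod ν) :=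
    hsnd.1
  have hfst2 : ∫ p, p.1 ∂(π.prod ν) = m := by rw [hmdef]; exact hfst.2
  have hsnd2 : ∫ p, p.2 ∂(π.prod ν) = (0 : EuclideanSpace ℝ (Fin n)) := by
    rw [← hν0]; exact hsnd.2
  have hLint : Integrable (fun p : EuclideanSpace ℝ (Fin n) × EuclideanSpace ℝ (Fin n) =>
      (Matrix.toEuclideanLin T).toContinuousLinearMap p.1) (π.prod ν) :=
    (Matrix.toEuclideanLin T).toContinuousLinearMap.integrable_comp hfst1
  -- mean equation
  have hm_eq : m = Matrix.toEuclideanLin T m + c := by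
    have h1 : m = ∫ p, F p ∂(π.prod ν) := by
      rw [hmdef]
      conv_lhs => rw [← hstat]
      exact integral_map hFm aestronglyMeasurable_id
    have hLc : Integrable (fun p : EuclideanSpace ℝ (Fin n) × EuclideanSpace ℝ (Fin n) =>
        (Matrix.toEuclideanLin T).toContinuousLinearMap p.1 + c) (π.prod ν) := by
      exact hLint.add (integrable_const c)
    have h2 : ∫ p, F p ∂(π.prod ν) =
        ∫ p : EuclideanSpace ℝ (Fin n) × EuclideanSpace ℝ (Fin n),
          ((Matrix.toEuclideanLin T).toContinuousLinearMap p.1 + c + p.2) ∂(π.prod ν) := rfl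
    have hInt : ∫ p, F p ∂(π.prod ν) = Matrix.toEuclideanLin T m + c := by
      rw [h2, integral_add hLc hsnd1, integral_add hLint (integrable_const c),
        (Matrix.toEuclideanLin T).toContinuousLinearMap.integral_comp_comm hfst1,
        hfst2, hsnd2, integral_const]
      simp
    exact h1.trans hInt
  have hmeanc : ∀ i : Fin n, m i = (∑ k, T i k * m k) + c i := by
    intro i
    have h := congrArg (fun v : EuclideanSpace ℝ (Fin n) => v i) hm_eq
    simpa [Matrix.toEuclideanLin_apply, Matrix.mulVec, dotProduct] using h
  -- coordinates of F minus mean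
  have hFi : ∀ (i : Fin n) (p : EuclideanSpace ℝ (Fin n) × EuclideanSpace ℝ (Fin n)),
      F p i - m i = (∑ k, T i k * (p.1 k - m k)) + p.2 i := by
    intro i p
    have h1 : F p i = (∑ k, T i k * p.1 k) + c i + p.2 i := by
      simp [hF, Matrix.toEuclideanLin_apply, Matrix.mulVec, dotProduct]
    rw [h1, hmeanc i]
    simp only [mul_sub, Finset.sum_sub_distrib]
    ring
  -- now prove the matrix identity entrywise
  ext i j
  -- LHS as an integral over the product measure
  have hgmeas : AEStronglyMeasurable
      (fun z : EuclideanSpace ℝ (Fin n) => (z i - m i) * (z j - m j)) π :=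
    (((hcont i).sub continuous_const).mul ((hcont j).sub continuous_const)).aestronglyMeasurable
  have hL1 : Sig i j = ∫ p, (F p i - m i) * (F p j - m j) ∂(π.prod ν) := by
    show (∫ z, (z i - m i) * (z j - m j) ∂π) = _
    conv_lhs => rw [← hstat]
    exact integral_map hFm (by rwa [hstat])
  -- expand the integrand
  have hpt : ∀ p : EuclideanSpace ℝ (Fin n) × EuclideanSpace ℝ (Fin n),
      (F p i - m i) * (F p j - m j) =
      ((∑ k, ∑ l, (T i k * T j l) * ((p.1 k - m k) * (p.1 l - m l)))
        + (∑ k, T i k * ((p.1 k - m k) * p.2 j)))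
        + ((∑ l, T j l * (p.2 i * (p.1 l - m l)))
        + p.2 i * p.2 j) := by
    intro p
    rw [hFi i p, hFi j p, stmt11_expand]
    have e1 : (∑ k, ∑ l, (T i k * (p.1 k - m k)) * (T j l * (p.1 l - m l)))
        = ∑ k, ∑ l, (T i k * T j l) * ((p.1 k - m k) * (p.1 l - m l)) :=
      Finset.sum_congr rfl fun k _ => Finset.sum_congr rfl fun l _ => by ring
    have e2 : (∑ k, (T i k * (p.1 k - m k)) * p.2 j)
        = ∑ k, T i k * ((p.1 k - m k) * p.2 j) :=
      Finset.sum_congr rfl fun k _ => by ring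
    have e3 : (∑ l, p.2 i * (T j l * (p.1 l - m l)))
        = ∑ l, T j l * (p.2 i * (p.1 l - m l)) :=
      Finset.sum_congr rfl fun l _ => by ring
    rw [e1, e2, e3]
    ring
  -- integrability of each piece
  have hA : ∀ k l : Fin n, Integrable
      (fun p : EuclideanSpace ℝ (Fin n) × EuclideanSpace ℝ (Fin n) =>
        (T i k * T j l) * ((p.1 k - m k) * (p.1 l - m l))) (π.prod ν) := by
    intro k l
    have hbase := (stmt11_aux_fst π ν
      (fun z : EuclideanSpace ℝ (Fin n) => (z k - m k) * (z l - m l))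
      ((((hcont k).sub continuous_const).mul
        ((hcont l).sub continuous_const)).aestronglyMeasurable)
      (hmulπ k l (m k) (m l))).1
    exact hbase.const_mul _
  have hB : ∀ k : Fin n, Integrable
      (fun p : EuclideanSpace ℝ (Fin n) × EuclideanSpace ℝ (Fin n) =>
        T i k * ((p.1 k - m k) * p.2 j)) (π.prod ν) := by
    intro k
    exact ((hintcaπ k (m k)).mul_prod (hintνc j)).const_mul _
  have hC : ∀ l : Fin n, Integrable
      (fun p : EuclideanSpace ℝ (Fin n) × EuclideanSpace ℝ (Fin n) =>
        T j l * (p.2 i * (p.1 l - m l))) (π.prod ν) := by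
    intro l
    have h1 : Integrable (fun p : EuclideanSpace ℝ (Fin n) × EuclideanSpace ℝ (Fin n) =>
        (p.1 l - m l) * p.2 i) (π.prod ν) :=
      (hintcaπ l (m l)).mul_prod (hintνc i)
    have h2 : Integrable (fun p : EuclideanSpace ℝ (Fin n) × EuclideanSpace ℝ (Fin n) =>
        p.2 i * (p.1 l - m l)) (π.prod ν) := by
      simpa [mul_comm] using h1
    exact h2.const_mul _
  have hD : Integrable
      (fun p : EuclideanSpace ℝ (Fin n) × EuclideanSpace ℝ (Fin n) => p.2 i * p.2 j)
      (π.prod ν) :=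
    (stmt11_aux_snd π ν (fun w : EuclideanSpace ℝ (Fin n) => w i * w j)
      (((hcont i).mul (hcont j)).aestronglyMeasurable) (hmulν i j)).1
  -- integrals of each piece
  have hAint : ∀ k l : Fin n,
      ∫ p, (T i k * T j l) * ((p.1 k - m k) * (p.1 l - m l)) ∂(π.prod ν) =
        (T i k * T j l) * Sig k l := by
    intro k l
    rw [integral_const_mul]
    congr 1
    exact (stmt11_aux_fst π ν
      (fun z : EuclideanSpace ℝ (Fin n) => (z k - m k) * (z l - m l))
      ((((hcont k).sub continuous_const).mul
        ((hcont l).sub continuous_const)).aestronglyMeasurable)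
      (hmulπ k l (m k) (m l))).2
  have hBint : ∀ k : Fin n,
      ∫ p, T i k * ((p.1 k - m k) * p.2 j) ∂(π.prod ν) = 0 := by
    intro k
    rw [integral_const_mul,
      integral_prod_mul (fun z : EuclideanSpace ℝ (Fin n) => z k - m k)
        (fun w : EuclideanSpace ℝ (Fin n) => w j), hcent k]
    ring
  have hCint : ∀ l : Fin n,
      ∫ p, T j l * (p.2 i * (p.1 l - m l)) ∂(π.prod ν) = 0 := by
    intro l
    rw [integral_const_mul]
    have h2 : ∫ p : EuclideanSpace ℝ (Fin n) × EuclideanSpace ℝ (Fin n),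
        p.2 i * (p.1 l - m l) ∂(π.prod ν) =
        ∫ p : EuclideanSpace ℝ (Fin n) × EuclideanSpace ℝ (Fin n),
          (fun z : EuclideanSpace ℝ (Fin n) => z l - m l) p.1 *
            (fun w : EuclideanSpace ℝ (Fin n) => w i) p.2 ∂(π.prod ν) := by
      congr 1
      ext p
      ring
    rw [h2, integral_prod_mul (fun z : EuclideanSpace ℝ (Fin n) => z l - m l)
      (fun w : EuclideanSpace ℝ (Fin n) => w i), hcent l]
    ring
  have hDint : ∫ p : EuclideanSpace ℝ (Fin n) × EuclideanSpace ℝ (Fin n),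
      p.2 i * p.2 j ∂(π.prod ν) = S i j :=
    (stmt11_aux_snd π ν (fun w : EuclideanSpace ℝ (Fin n) => w i * w j)
      (((hcont i).mul (hcont j)).aestronglyMeasurable) (hmulν i j)).2
  -- put it together
  have hsum1 : Integrable (fun p : EuclideanSpace ℝ (Fin n) × EuclideanSpace ℝ (Fin n) =>
      ∑ k, ∑ l, (T i k * T j l) * ((p.1 k - m k) * (p.1 l - m l))) (π.prod ν) :=
    integrable_finset_sum _ fun k _ => integrable_finset_sum _ fun l _ => hA k l
  have hsum2 : Integrable (fun p : EuclideanSpace ℝ (Fin n) × EuclideanSpace ℝ (Fin n) =>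
      ∑ k, T i k * ((p.1 k - m k) * p.2 j)) (π.prod ν) :=
    integrable_finset_sum _ fun k _ => hB k
  have hsum3 : Integrable (fun p : EuclideanSpace ℝ (Fin n) × EuclideanSpace ℝ (Fin n) =>
      ∑ l, T j l * (p.2 i * (p.1 l - m l))) (π.prod ν) :=
    integrable_finset_sum _ fun l _ => hC l
  have hsum12 : Integrable (fun p : EuclideanSpace ℝ (Fin n) × EuclideanSpace ℝ (Fin n) =>
      (∑ k, ∑ l, (T i k * T j l) * ((p.1 k - m k) * (p.1 l - m l)))
        + (∑ k, T i k * ((p.1 k - m k) * p.2 j))) (π.prod ν) :=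
    hsum1.add hsum2
  have hsum34 : Integrable (fun p : EuclideanSpace ℝ (Fin n) × EuclideanSpace ℝ (Fin n) =>
      (∑ l, T j l * (p.2 i * (p.1 l - m l))) + p.2 i * p.2 j) (π.prod ν) :=
    hsum3.add hD
  have hmain : Sig i j = (∑ k, ∑ l, (T i k * T j l) * Sig k l) + S i j := by
    rw [hL1]
    calc ∫ p, (F p i - m i) * (F p j - m j) ∂(π.prod ν)
        = ∫ p : EuclideanSpace ℝ (Fin n) × EuclideanSpace ℝ (Fin n),
            (((∑ k, ∑ l, (T i k * T j l) * ((p.1 k - m k) * (p.1 l - m l)))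
              + (∑ k, T i k * ((p.1 k - m k) * p.2 j)))
              + ((∑ l, T j l * (p.2 i * (p.1 l - m l)))
              + p.2 i * p.2 j)) ∂(π.prod ν) :=
          integral_congr_ae (Filter.Eventually.of_forall hpt)
      _ = (∑ k, ∑ l, (T i k * T j l) * Sig k l) + S i j := by
          rw [integral_add hsum12 hsum34, integral_add hsum1 hsum2, integral_add hsum3 hD,
            integral_finset_sum _ (fun k _ => integrable_finset_sum _ fun l _ => hA k l),
            integral_finset_sum _ (fun k _ => hB k),
            integral_finset_sum _ (fun l _ => hC l), hDint]
          simp only [hBint, hCint, Finset.sum_const_zero, add_zero, zero_add]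
          congr 1
          refine Finset.sum_congr rfl fun k _ => ?_
          rw [integral_finset_sum _ (fun l _ => hA k l)]
          exact Finset.sum_congr rfl fun l _ => hAint k l
  rw [hmain]
  simp only [Matrix.add_apply, Matrix.mul_apply, Matrix.transpose_apply]
  congr 1
  rw [Finset.sum_comm]
  exact Finset.sum_congr rfl fun l _ => by
    rw [Finset.sum_mul]
    exact Finset.sum_congr rfl fun k _ => by ring
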